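/- Let F be a standard Borel space and let m ∈ ℕ. Then the parallel extension function Ext : 𝔻 × (Fin m → F) → 𝔻 defined by Ext(S, v) = S ∪ {v(0), …, v(m−1)} is measurable, where Fin m → F carries the product (pi) σ-algebra of the Borel σ-algebra of F. -/

import Mathlib

open MeasureTheory

/-- The canonical embedding of a database instance (a finite set of facts)
into the space of measures: `S ↦ ∑_{x ∈ S} δ_x`. -/
noncomputable def iota {F : Type*} [MeasurableSpace F] (S : Finset F) : Measure F :=
  ∑ x ∈ S, Measure.dirac x

/-- The instance space `𝔻`: `Finset F` equipped with the σ-algebra comapped along `ι`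
from the canonical σ-algebra on `Measure F`. -/
noncomputable instance instanceSpace (F : Type*) [MeasurableSpace F] : MeasurableSpace (Finset F) :=
  MeasurableSpace.comap iota inferInstance

section Aux
open ProbabilityTheory

variable {F : Type*} [MeasurableSpace F]

lemma measurable_iota : Measurable (iota : Finset F → Measure F) :=
  fun _s hs => ⟨_s, hs, rfl⟩

lemma iota_apply (S : Finset F) (A : Set F) : iota S A = ∑ x ∈ S, Measure.dirac x A :=
  Measure.finset_sum_apply S _ A

lemma iota_univ (S : Finset F) : iota S Set.univ = (S.card : ENNReal) := by
  simp [iota_apply]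

lemma iota_singleton [MeasurableSingletonClass F] [DecidableEq F] (S : Finset F) (x : F) :
    iota S {x} = if x ∈ S then 1 else 0 := by
  rw [iota_apply]
  have : ∀ y : F, Measure.dirac y ({x} : Set F) = if y = x then 1 else 0 := by
    intro y
    rw [Measure.dirac_apply' _ (measurableSet_singleton x)]
    by_cases h : y = x <;> simp [Set.indicator_apply, h]
  simp_rw [this]
  exact Finset.sum_ite_eq' S x fun _ => 1

/-- The kernel `(S, x) ↦ ι S` from `Finset F × F` to `F`. -/
noncomputable def iotaKer : ProbabilityTheory.Kernel (Finset F × F) F :=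
  ⟨fun p => iota p.1, measurable_iota.comp measurable_fst⟩

instance : IsSFiniteKernel (iotaKer (F := F)) := by
  constructor
  refine ⟨fun n => ⟨fun p => if iota p.1 Set.univ = (n : ENNReal) then iota p.1 else 0, ?_⟩,
    fun n => ?_, ?_⟩
  · refine Measurable.ite ?_ (measurable_iota.comp measurable_fst) measurable_const
    exact ((Measure.measurable_coe MeasurableSet.univ).comp
      (measurable_iota.comp measurable_fst)) (measurableSet_singleton _)
  · refine ⟨(n : ENNReal) + 1, ?_, fun p => ?_⟩
    · exact ENNReal.add_lt_top.mpr ⟨ENNReal.natCast_lt_top n, ENNReal.one_lt_top⟩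
    · show (if iota p.1 Set.univ = (n : ENNReal) then iota p.1 else 0) Set.univ ≤ _
      split_ifs with h
      · rw [h]; exact le_self_add
      · simp
  · ext p s hs
    rw [Kernel.sum_apply' _ _ hs]
    show iota p.1 s = ∑' n : ℕ, (if iota p.1 Set.univ = (n : ENNReal) then iota p.1 else 0) s
    have hterm : ∀ n : ℕ, ((if iota p.1 Set.univ = (n : ENNReal) then iota p.1 else 0) s)
        = if n = p.1.card then iota p.1 s else 0 := by
      intro n
      by_cases h : n = p.1.card
      · rw [if_pos, if_pos h]
        rw [h, iota_univ]
      · rw [if_neg, if_neg h]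
        · simp
        · intro hc
          rw [iota_univ, Nat.cast_inj] at hc
          exact h hc.symm
    exact ((tsum_congr hterm).trans (tsum_ite_eq _ _)).symm

variable [StandardBorelSpace F]

lemma measurableSet_eqF {α : Type*} [MeasurableSpace α] {f g : α → F}
    (hf : Measurable f) (hg : Measurable g) : MeasurableSet {x | f x = g x} := by
  obtain ⟨e, he⟩ := exists_measurableEmbedding_real F
  have : {x | f x = g x} = {x | e (f x) = e (g x)} := by
    ext x; simp [he.injective.eq_iff]
  rw [this]
  exact measurableSet_eq_fun (he.measurable.comp hf) (he.measurable.comp hg)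

lemma measurable_iota_singleton :
    Measurable fun p : Finset F × F => iota p.1 {p.2} := by
  have ht : MeasurableSet {q : (Finset F × F) × F | q.2 = q.1.2} :=
    measurableSet_eqF measurable_snd (measurable_snd.comp measurable_fst)
  have h := ProbabilityTheory.Kernel.measurable_kernel_prodMk_left
    (κ := iotaKer (F := F)) ht
  have heq : (fun p : Finset F × F =>
      iotaKer p (Prod.mk p ⁻¹' {q : (Finset F × F) × F | q.2 = q.1.2}))
      = fun p : Finset F × F => iota p.1 {p.2} := by
    funext p
    have : (Prod.mk p ⁻¹' {q : (Finset F × F) × F | q.2 = q.1.2}) = {p.2} := by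
      ext y; simp [Set.mem_preimage]
    rw [this]; rfl
  rw [heq] at h
  exact h

lemma measurableSet_memFinset [DecidableEq F] :
    MeasurableSet {p : Finset F × F | p.2 ∈ p.1} := by
  have : {p : Finset F × F | p.2 ∈ p.1}
      = (fun p : Finset F × F => iota p.1 {p.2}) ⁻¹' {1} := by
    ext p
    simp only [Set.mem_setOf_eq, Set.mem_preimage, Set.mem_singleton_iff, iota_singleton]
    by_cases h : p.2 ∈ p.1 <;> simp [h]
  rw [this]
  exact measurable_iota_singleton (measurableSet_singleton 1)

omit [StandardBorelSpace F] in
lemma iota_union_image [DecidableEq F] {m : ℕ} (S : Finset F) (v : Fin m → F) :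
    iota (S ∪ Finset.image v Finset.univ)
      = iota S + ∑ i : Fin m,
          if v i ∉ S ∧ ∀ j, j < i → v j ≠ v i then Measure.dirac (v i) else 0 := by
  set J : Finset (Fin m) :=
    Finset.univ.filter (fun i : Fin m => v i ∉ S ∧ ∀ j, j < i → v j ≠ v i) with hJ
  have hmemJ : ∀ i : Fin m, i ∈ J ↔ v i ∉ S ∧ ∀ j, j < i → v j ≠ v i := by
    intro i; simp [hJ]
  have himg : Finset.image v J = Finset.image v Finset.univ \ S := by
    ext x
    simp only [Finset.mem_image, Finset.mem_sdiff, Finset.mem_univ, true_and]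
    constructor
    · rintro ⟨i, hi, rfl⟩
      exact ⟨⟨i, rfl⟩, ((hmemJ i).1 hi).1⟩
    · rintro ⟨⟨i, rfl⟩, hxS⟩
      set T : Finset (Fin m) := Finset.univ.filter fun j : Fin m => v j = v i with hT
      have hiT : i ∈ T := by simp [hT]
      have hTne : T.Nonempty := ⟨i, hiT⟩
      set k := T.min' hTne with hk
      have hkT : k ∈ T := T.min'_mem hTne
      have hvk : v k = v i := (Finset.mem_filter.1 hkT).2
      refine ⟨k, (hmemJ k).2 ⟨hvk ▸ hxS, fun j hj hvj => ?_⟩, hvk⟩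
      have : j ∈ T := by simp [hT, hvj, hvk]
      exact absurd (T.min'_le j this) (not_le.2 hj)
  have hdisj : Disjoint S (Finset.image v J) := by
    rw [himg]; exact Finset.sdiff_disjoint.symm
  have huni : S ∪ Finset.image v Finset.univ = S ∪ Finset.image v J := by
    rw [himg, Finset.union_sdiff_self_eq_union]
  have hinj : ∀ x ∈ J, ∀ y ∈ J, v x = v y → x = y := by
    intro x hx y hy hxy
    rcases lt_trichotomy x y with h | h | h
    · exact absurd hxy (((hmemJ y).1 hy).2 x h)
    · exact h
    · exact absurd hxy.symm (((hmemJ x).1 hx).2 y h)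
  rw [huni]
  show ∑ x ∈ S ∪ Finset.image v J, Measure.dirac x = _
  rw [Finset.sum_union hdisj, Finset.sum_image hinj]
  congr 1
  rw [← Finset.sum_filter]

end Aux

/-- The parallel extension function `Ext (S, v) = S ∪ {v 0, …, v (m-1)}` is measurable,
where `Fin m → F` carries the product (pi) σ-algebra of the Borel σ-algebra of the
standard Borel space `F`. -/
theorem measurable_Ext (F : Type*) [MeasurableSpace F] [StandardBorelSpace F]
    [DecidableEq F] (m : ℕ) :
    Measurable (fun p : Finset F × (Fin m → F) =>
      p.1 ∪ Finset.image p.2 Finset.univ) := by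
  have hmain : Measurable fun p : Finset F × (Fin m → F) =>
      iota (p.1 ∪ Finset.image p.2 Finset.univ) := by
    apply Measure.measurable_of_measurable_coe
    intro A hA
    have hfun : (fun p : Finset F × (Fin m → F) =>
        iota (p.1 ∪ Finset.image p.2 Finset.univ) A)
        = fun p => iota p.1 A + ∑ i : Fin m,
            if p.2 i ∉ p.1 ∧ ∀ j, j < i → p.2 j ≠ p.2 i
            then Measure.dirac (p.2 i) A else 0 := by
      funext p
      rw [iota_union_image p.1 p.2]
      rw [Measure.add_apply, Measure.finset_sum_apply]
      congr 1
      refine Finset.sum_congr rfl fun i _ => ?_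
      rw [apply_ite (fun μ : Measure F => μ A)]
      simp
    rw [hfun]
    apply Measurable.add
    · exact (Measure.measurable_coe hA).comp (measurable_iota.comp measurable_fst)
    · apply Finset.measurable_sum
      intro i _
      have hset : MeasurableSet {p : Finset F × (Fin m → F) |
          p.2 i ∉ p.1 ∧ ∀ j, j < i → p.2 j ≠ p.2 i} := by
        have h1 : MeasurableSet {p : Finset F × (Fin m → F) | p.2 i ∈ p.1} := by
          have : {p : Finset F × (Fin m → F) | p.2 i ∈ p.1}
              = (fun p : Finset F × (Fin m → F) => (p.1, p.2 i)) ⁻¹'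
                  {q : Finset F × F | q.2 ∈ q.1} := rfl
          rw [this]
          exact (measurable_fst.prodMk ((measurable_pi_apply i).comp measurable_snd))
            measurableSet_memFinset
        have h2 : MeasurableSet {p : Finset F × (Fin m → F) | ∀ j, j < i → p.2 j ≠ p.2 i} := by
          have : {p : Finset F × (Fin m → F) | ∀ j, j < i → p.2 j ≠ p.2 i}
              = ⋂ j : Fin m, {p : Finset F × (Fin m → F) | j < i → p.2 j ≠ p.2 i} := by
            ext p; simp
          rw [this]
          refine MeasurableSet.iInter fun j => ?_
          by_cases hj : j < i
          · have : {p : Finset F × (Fin m → F) | j < i → p.2 j ≠ p.2 i}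
                = {p : Finset F × (Fin m → F) | p.2 j = p.2 i}ᶜ := by
              ext p; simp [hj]
            rw [this]
            exact (measurableSet_eqF ((measurable_pi_apply j).comp measurable_snd)
              ((measurable_pi_apply i).comp measurable_snd)).compl
          · have : {p : Finset F × (Fin m → F) | j < i → p.2 j ≠ p.2 i} = Set.univ := by
              ext p; simp [hj]
            rw [this]; exact MeasurableSet.univ
        have hEq : {p : Finset F × (Fin m → F) |
            p.2 i ∉ p.1 ∧ ∀ j, j < i → p.2 j ≠ p.2 i}
            = {p : Finset F × (Fin m → F) | p.2 i ∈ p.1}ᶜ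
              ∩ {p : Finset F × (Fin m → F) | ∀ j, j < i → p.2 j ≠ p.2 i} := rfl
        rw [hEq]
        exact h1.compl.inter h2
      exact Measurable.ite hset
        ((Measure.measurable_coe hA).comp
          (Measure.measurable_dirac.comp ((measurable_pi_apply i).comp measurable_snd)))
        measurable_const
  intro s hs
  obtain ⟨t, ht, rfl⟩ := hs
  exact hmain ht
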